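/- Moran's one-dimensional test φ is a regular test of level α: β_φ(0) = α, the map θ ↦ β_φ(θ) is continuous on ℝ, and β_φ(θ) → 1 as |θ| → ∞; that is, φ ∈ Φ₀(α). -/

import Mathlib

open MeasureTheory Filter

section Stmt7Aux

open Set Topology

namespace Stmt7Aux

/-- The CDF associated to a density. -/
noncomputable def Φ (f : ℝ → ℝ) (t : ℝ) : ℝ := ∫ x in Set.Iic t, f x

lemma integrable_of_int_one {f : ℝ → ℝ} (hi : ∫ x, f x = 1) : Integrable f := by
  by_contra h
  rw [MeasureTheory.integral_undef h] at hi
  norm_num at hi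

lemma Φ_mono {f : ℝ → ℝ} (hp : ∀ x, 0 < f x) (hint : Integrable f) : Monotone (Φ f) := by
  intro s t hst
  exact setIntegral_mono_set hint.integrableOn
    (Eventually.of_forall fun x => (hp x).le)
    (HasSubset.Subset.eventuallyLE (Iic_subset_Iic.2 hst))

lemma Φ_strictMono {f : ℝ → ℝ} (hc : Continuous f) (hp : ∀ x, 0 < f x)
    (hint : Integrable f) : StrictMono (Φ f) := by
  intro s t hst
  have hsplit : Φ f t = Φ f s + ∫ x in Ioc s t, f x := by
    rw [Φ, Φ, ← setIntegral_union (Iic_disjoint_Ioc le_rfl) measurableSet_Ioc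
      hint.integrableOn hint.integrableOn, Iic_union_Ioc_eq_Iic hst.le]
  have hpos : 0 < ∫ x in Ioc s t, f x := by
    rw [setIntegral_pos_iff_support_of_nonneg_ae
      (Eventually.of_forall fun x => (hp x).le) hint.integrableOn]
    have : Function.support f = univ := by
      ext x; simp [Function.mem_support, (hp x).ne']
    rw [this, univ_inter, Real.volume_Ioc]
    simp [hst]
  linarith [hsplit]

lemma Φ_lipschitz {f : ℝ → ℝ} (hc : Continuous f) (hp : ∀ x, 0 < f x) {M : ℝ}
    (hb : ∀ x, f x ≤ M) (hint : Integrable f) : LipschitzWith (Real.toNNReal M) (Φ f) := by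
  have hM : 0 < M := lt_of_lt_of_le (hp 0) (hb 0)
  have key : ∀ s t : ℝ, s ≤ t → Φ f t - Φ f s ≤ M * (t - s) := by
    intro s t hst
    have hsplit : Φ f t = Φ f s + ∫ x in Ioc s t, f x := by
      rw [Φ, Φ, ← setIntegral_union (Iic_disjoint_Ioc le_rfl) measurableSet_Ioc
        hint.integrableOn hint.integrableOn, Iic_union_Ioc_eq_Iic hst]
    have hle : ∫ x in Ioc s t, f x ≤ M * (t - s) := by
      have := norm_setIntegral_le_of_norm_le_const (μ := volume) (s := Ioc s t)
        (C := M) (f := f) (by rw [Real.volume_Ioc]; exact ENNReal.ofReal_lt_top)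
        (fun x _ => by rw [Real.norm_eq_abs, abs_of_pos (hp x)]; exact hb x)
      rw [measureReal_def, Real.volume_Ioc, ENNReal.toReal_ofReal (by linarith)] at this
      exact (le_abs_self _).trans (this.trans (le_of_eq rfl))
    linarith
  apply LipschitzWith.of_dist_le_mul
  intro s t
  rcases le_total s t with h | h
  · rw [Real.dist_eq, Real.dist_eq, abs_of_nonpos (by linarith [Φ_mono hp hint h]),
      abs_of_nonpos (by linarith), Real.coe_toNNReal _ hM.le]
    have := key s t h
    linarith
  · rw [Real.dist_eq, Real.dist_eq, abs_of_nonneg (by linarith [Φ_mono hp hint h]),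
      abs_of_nonneg (by linarith), Real.coe_toNNReal _ hM.le]
    have := key t s h
    linarith

lemma Φ_continuous {f : ℝ → ℝ} (hc : Continuous f) (hp : ∀ x, 0 < f x) {M : ℝ}
    (hb : ∀ x, f x ≤ M) (hint : Integrable f) : Continuous (Φ f) :=
  (Φ_lipschitz hc hp hb hint).continuous

lemma Φ_nonneg {f : ℝ → ℝ} (hp : ∀ x, 0 < f x) (t : ℝ) : 0 ≤ Φ f t :=
  setIntegral_nonneg measurableSet_Iic fun x _ => (hp x).le

lemma Φ_le_one {f : ℝ → ℝ} (hp : ∀ x, 0 < f x) (hint : Integrable f)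
    (hi : ∫ x, f x = 1) (t : ℝ) : Φ f t ≤ 1 := by
  rw [← hi]
  calc Φ f t ≤ ∫ x in (univ : Set ℝ), f x := by
        exact setIntegral_mono_set hint.integrableOn
          (Eventually.of_forall fun x => (hp x).le)
          (HasSubset.Subset.eventuallyLE (subset_univ _))
    _ = ∫ x, f x := by rw [setIntegral_univ]

lemma Φ_atTop {f : ℝ → ℝ} (hint : Integrable f) (hi : ∫ x, f x = 1) :
    Tendsto (Φ f) atTop (𝓝 1) := by
  have := tendsto_setIntegral_of_monotone (μ := volume) (f := f)
    (s := fun t : ℝ => Iic t) (fun t => measurableSet_Iic)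
    (fun s t hst => Iic_subset_Iic.2 hst)
    (by rw [iUnion_Iic]; exact hint.integrableOn)
  rwa [iUnion_Iic, setIntegral_univ, hi] at this

lemma Φ_atBot {f : ℝ → ℝ} (hint : Integrable f) :
    Tendsto (Φ f) atBot (𝓝 0) := by
  have hI : ⋂ t : ℝ, Iic (-t) = (∅ : Set ℝ) := by
    ext x
    simp only [mem_iInter, mem_Iic, mem_empty_iff_false, iff_false, not_forall, not_le]
    exact ⟨-x + 1, by linarith⟩
  have h := tendsto_setIntegral_of_antitone (μ := volume) (f := f)
    (s := fun t : ℝ => Iic (-t)) (fun t => measurableSet_Iic)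
    (fun s t hst => Iic_subset_Iic.2 (by linarith))
    ⟨0, hint.integrableOn⟩
  rw [hI] at h
  simp only [Measure.restrict_empty, integral_zero_measure] at h
  have := h.comp (tendsto_neg_atBot_atTop : Tendsto (fun x : ℝ => -x) atBot atTop)
  have heq : ((fun i : ℝ => ∫ (x : ℝ) in Iic (-i), f x) ∘ (fun x : ℝ => -x)) = Φ f := by
    funext u; simp [Function.comp, Φ]
  rwa [heq] at this

lemma Φ_quantile {f : ℝ → ℝ} (hc : Continuous f) (hp : ∀ x, 0 < f x)
    {M : ℝ} (hb : ∀ x, f x ≤ M) (hint : Integrable f) (hi : ∫ x, f x = 1)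
    {q : ℝ} (hq0 : 0 < q) (hq1 : q < 1) :
    Φ f (sInf {t : ℝ | q ≤ Φ f t}) = q := by
  obtain ⟨s, hs⟩ : ∃ s, Φ f s < q := ((Φ_atBot hint).eventually (eventually_lt_nhds hq0)).exists
  obtain ⟨t, ht⟩ : ∃ t, q < Φ f t :=
    ((Φ_atTop hint hi).eventually (eventually_gt_nhds hq1)).exists
  have hst : s ≤ t := by
    by_contra h
    exact absurd (Φ_mono hp hint (le_of_not_ge h)) (by linarith)
  obtain ⟨t₀, _, ht₀⟩ := intermediate_value_Icc hst
    ((Φ_continuous hc hp hb hint).continuousOn) ⟨hs.le, ht.le⟩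
  have hset : {t : ℝ | q ≤ Φ f t} = Ici t₀ := by
    ext u
    simp only [mem_setOf_eq, mem_Ici, ← ht₀]
    exact (Φ_strictMono hc hp hint).le_iff_le
  rw [hset, csInf_Ici, ht₀]

lemma shift_setIntegral (f : ℝ → ℝ) (θ : ℝ) (s : Set ℝ) :
    ∫ x in (fun x : ℝ => x - θ) ⁻¹' s, f (x - θ) = ∫ y in s, f y :=
  (measurePreserving_sub_right volume θ).setIntegral_preimage_emb
    (MeasurableEquiv.subRight θ).measurableEmbedding f s

lemma shift_Iic (f : ℝ → ℝ) (θ c : ℝ) :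
    ∫ x in Iic c, f (x - θ) = ∫ y in Iic (c - θ), f y := by
  have : (fun x : ℝ => x - θ) ⁻¹' Iic (c - θ) = Iic c := by
    ext x; simp [sub_le_sub_iff_right]
  rw [← this, shift_setIntegral]

lemma shift_Ioi (f : ℝ → ℝ) (θ c : ℝ) :
    ∫ x in Ioi c, f (x - θ) = ∫ y in Ioi (c - θ), f y := by
  have : (fun x : ℝ => x - θ) ⁻¹' Ioi (c - θ) = Ioi c := by
    ext x; simp [sub_lt_sub_iff_right]
  rw [← this, shift_setIntegral]

lemma shift_Iio (f : ℝ → ℝ) (θ c : ℝ) :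
    ∫ x in Iio c, f (x - θ) = ∫ y in Iio (c - θ), f y := by
  have : (fun x : ℝ => x - θ) ⁻¹' Iio (c - θ) = Iio c := by
    ext x; simp [sub_lt_sub_iff_right]
  rw [← this, shift_setIntegral]

lemma integral_Ioi_eq (f : ℝ → ℝ) (hint : Integrable f) (hi : ∫ x, f x = 1) (c : ℝ) :
    ∫ x in Ioi c, f x = 1 - ∫ x in Iic c, f x := by
  have h : (∫ x in Iic c, f x) + ∫ x in Ioi c, f x = 1 := by
    rw [← setIntegral_union (Iic_disjoint_Ioi le_rfl) measurableSet_Ioi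
      hint.integrableOn hint.integrableOn, Iic_union_Ioi, setIntegral_univ, hi]
  linarith

lemma Iio_eq_Iic_int (f : ℝ → ℝ) (c : ℝ) :
    ∫ x in Iio c, f x = ∫ x in Iic c, f x :=
  setIntegral_congr_set Iio_ae_eq_Iic

lemma rect (f₁ f₂ : ℝ → ℝ) (h₁p : ∀ x, 0 ≤ f₁ x)
    (h₁c : Continuous f₁) (h₂c : Continuous f₂) (θ : ℝ)
    {A B : Set ℝ} (hA : MeasurableSet A) (hB : MeasurableSet B) :
    (volume : Measure (ℝ × ℝ)).withDensity
      (fun x => ENNReal.ofReal (f₁ (x.1 - θ) * f₂ (x.2 - θ))) (A ×ˢ B)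
    = (∫⁻ x in A, ENNReal.ofReal (f₁ (x - θ))) *
      (∫⁻ x in B, ENNReal.ofReal (f₂ (x - θ))) := by
  rw [withDensity_apply _ (hA.prod hB), Measure.volume_eq_prod, ← Measure.prod_restrict]
  simp_rw [fun (x : ℝ × ℝ) => ENNReal.ofReal_mul (p := f₁ (x.1 - θ)) (q := f₂ (x.2 - θ))
    (h₁p _)]
  exact lintegral_prod_mul
    (ENNReal.measurable_ofReal.comp (h₁c.measurable.comp (measurable_id.sub_const θ))).aemeasurable
    (ENNReal.measurable_ofReal.comp (h₂c.measurable.comp (measurable_id.sub_const θ))).aemeasurable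

lemma lint_ofReal (f : ℝ → ℝ) (hp : ∀ x, 0 ≤ f x)
    (hint : Integrable f) (θ : ℝ) (A : Set ℝ) :
    ∫⁻ x in A, ENNReal.ofReal (f (x - θ)) = ENNReal.ofReal (∫ x in A, f (x - θ)) := by
  rw [← ofReal_integral_eq_lintegral_ofReal]
  · exact ((hint.comp_sub_right θ)).integrableOn
  · exact Eventually.of_forall fun x => hp (x - θ)

end Stmt7Aux

end Stmt7Aux

/- STATEMENT 7: Moran's one-dimensional test φ is a regular test of level α:
β_φ(0) = α, θ ↦ β_φ(θ) is continuous on ℝ, and β_φ(θ) → 1 as |θ| → ∞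
(equivalently, 1 − β_φ vanishes at infinity); that is, φ ∈ Φ₀(α). -/
theorem stmt_7
    (f₁ f₂ : ℝ → ℝ)
    (h₁c : Continuous f₁) (h₂c : Continuous f₂)
    (h₁p : ∀ x, 0 < f₁ x) (h₂p : ∀ x, 0 < f₂ x)
    (M : ℝ) (h₁b : ∀ x, f₁ x ≤ M) (h₂b : ∀ x, f₂ x ≤ M)
    (h₁i : ∫ x, f₁ x = 1) (h₂i : ∫ x, f₂ x = 1)
    -- P θ is the law of (U₁ + θ, U₂ + θ)
    (P : ℝ → Measure (ℝ × ℝ))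
    (hP : P = fun θ => (volume : Measure (ℝ × ℝ)).withDensity
      (fun x => ENNReal.ofReal (f₁ (x.1 - θ) * f₂ (x.2 - θ))))
    (α : ℝ) (hα : α ∈ Set.Ioo (0 : ℝ) 1)
    -- b₁ and b₂ are the (1−α)'th and α'th quantiles of the law of U₂
    (b₁ b₂ : ℝ)
    (hb₁ : b₁ = sInf {t : ℝ | 1 - α ≤ ∫ x in Set.Iic t, f₂ x})
    (hb₂ : b₂ = sInf {t : ℝ | α ≤ ∫ x in Set.Iic t, f₂ x})
    (a : ℝ)
    -- β is the power function of Moran's test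
    (β : ℝ → ℝ)
    (hβ : β = fun θ => ((P θ)
      ((Set.Ioi a ×ˢ Set.Ioi b₁) ∪ (Set.Iio a ×ˢ Set.Iio b₂))).toReal) :
    β 0 = α ∧ Continuous β ∧ Tendsto β (cocompact ℝ) (nhds 1) ∧
      (∀ ε : ℝ, 0 < ε → ∃ K : Set ℝ, IsCompact K ∧ {θ : ℝ | ε ≤ 1 - β θ} ⊆ K) := by
  obtain ⟨hα0, hα1⟩ := hα
  have hint₁ : Integrable f₁ := Stmt7Aux.integrable_of_int_one h₁i
  have hint₂ : Integrable f₂ := Stmt7Aux.integrable_of_int_one h₂i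
  have h₁nn : ∀ x, 0 ≤ f₁ x := fun x => (h₁p x).le
  -- nonnegativity / boundedness of the CDFs
  have hnn₁ := Stmt7Aux.Φ_nonneg h₁p
  have hnn₂ := Stmt7Aux.Φ_nonneg h₂p
  have hle₁ := Stmt7Aux.Φ_le_one h₁p hint₁ h₁i
  have hle₂ := Stmt7Aux.Φ_le_one h₂p hint₂ h₂i
  -- the key closed-form expression for β
  have hβ' : ∀ θ : ℝ, β θ =
      (1 - Stmt7Aux.Φ f₁ (a - θ)) * (1 - Stmt7Aux.Φ f₂ (b₁ - θ)) +
        Stmt7Aux.Φ f₁ (a - θ) * Stmt7Aux.Φ f₂ (b₂ - θ) := by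
    intro θ
    have hdisj : Disjoint (Set.Ioi a ×ˢ Set.Ioi b₁) (Set.Iio a ×ˢ Set.Iio b₂) := by
      rw [Set.disjoint_left]
      rintro ⟨x, y⟩ ⟨hx1, _⟩ ⟨hx2, _⟩
      exact absurd (Set.mem_Iio.1 hx2) (not_lt.2 (Set.mem_Ioi.1 hx1).le)
    have hm2 : MeasurableSet (Set.Iio a ×ˢ Set.Iio b₂) :=
      measurableSet_Iio.prod measurableSet_Iio
    rw [hβ, hP]
    simp only
    rw [measure_union hdisj hm2,
      Stmt7Aux.rect f₁ f₂ h₁nn h₁c h₂c θ measurableSet_Ioi measurableSet_Ioi,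
      Stmt7Aux.rect f₁ f₂ h₁nn h₁c h₂c θ measurableSet_Iio measurableSet_Iio,
      Stmt7Aux.lint_ofReal f₁ h₁nn hint₁ θ, Stmt7Aux.lint_ofReal f₁ h₁nn hint₁ θ,
      Stmt7Aux.lint_ofReal f₂ (fun x => (h₂p x).le) hint₂ θ,
      Stmt7Aux.lint_ofReal f₂ (fun x => (h₂p x).le) hint₂ θ,
      Stmt7Aux.shift_Ioi f₁ θ a, Stmt7Aux.shift_Ioi f₂ θ b₁,
      Stmt7Aux.shift_Iio f₁ θ a, Stmt7Aux.shift_Iio f₂ θ b₂,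
      Stmt7Aux.integral_Ioi_eq f₁ hint₁ h₁i, Stmt7Aux.integral_Ioi_eq f₂ hint₂ h₂i,
      Stmt7Aux.Iio_eq_Iic_int f₁, Stmt7Aux.Iio_eq_Iic_int f₂]
    simp only [Stmt7Aux.Φ] at hnn₁ hnn₂ hle₁ hle₂ ⊢
    have e₁ : (0:ℝ) ≤ 1 - ∫ x in Set.Iic (a - θ), f₁ x := by linarith [hle₁ (a - θ)]
    have e₂ : (0:ℝ) ≤ 1 - ∫ x in Set.Iic (b₁ - θ), f₂ x := by linarith [hle₂ (b₁ - θ)]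
    rw [← ENNReal.ofReal_mul e₁, ← ENNReal.ofReal_mul (hnn₁ (a - θ)),
      ← ENNReal.ofReal_add (mul_nonneg e₁ e₂) (mul_nonneg (hnn₁ (a - θ)) (hnn₂ (b₂ - θ))),
      ENNReal.toReal_ofReal
        (add_nonneg (mul_nonneg e₁ e₂) (mul_nonneg (hnn₁ (a - θ)) (hnn₂ (b₂ - θ))))]
  -- quantile identities
  have hq₁ : Stmt7Aux.Φ f₂ b₁ = 1 - α := by
    rw [hb₁]
    exact Stmt7Aux.Φ_quantile h₂c h₂p h₂b hint₂ h₂i (by linarith) (by linarith)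
  have hq₂ : Stmt7Aux.Φ f₂ b₂ = α := by
    rw [hb₂]
    exact Stmt7Aux.Φ_quantile h₂c h₂p h₂b hint₂ h₂i hα0 hα1
  -- level α
  have part1 : β 0 = α := by
    rw [hβ' 0]
    simp only [sub_zero]
    rw [hq₁, hq₂]
    ring
  -- continuity
  have hc₁ : Continuous fun θ : ℝ => Stmt7Aux.Φ f₁ (a - θ) :=
    (Stmt7Aux.Φ_continuous h₁c h₁p h₁b hint₁).comp (continuous_const.sub continuous_id)
  have hc₂ : Continuous fun θ : ℝ => Stmt7Aux.Φ f₂ (b₁ - θ) :=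
    (Stmt7Aux.Φ_continuous h₂c h₂p h₂b hint₂).comp (continuous_const.sub continuous_id)
  have hc₃ : Continuous fun θ : ℝ => Stmt7Aux.Φ f₂ (b₂ - θ) :=
    (Stmt7Aux.Φ_continuous h₂c h₂p h₂b hint₂).comp (continuous_const.sub continuous_id)
  have hβfun : β = fun θ : ℝ =>
      (1 - Stmt7Aux.Φ f₁ (a - θ)) * (1 - Stmt7Aux.Φ f₂ (b₁ - θ)) +
        Stmt7Aux.Φ f₁ (a - θ) * Stmt7Aux.Φ f₂ (b₂ - θ) := funext hβ'
  have part2 : Continuous β := by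
    rw [hβfun]
    exact (((continuous_const.sub hc₁).mul (continuous_const.sub hc₂)).add (hc₁.mul hc₃))
  -- limits at infinity
  have hsub_atTop : ∀ c : ℝ, Tendsto (fun θ : ℝ => c - θ) atTop atBot := by
    intro c
    simpa [sub_eq_neg_add] using
      tendsto_atBot_add_const_right atTop c (tendsto_neg_atTop_atBot : Tendsto (fun x : ℝ => -x) atTop atBot)
  have hsub_atBot : ∀ c : ℝ, Tendsto (fun θ : ℝ => c - θ) atBot atTop := by
    intro c
    simpa [sub_eq_neg_add] using
      tendsto_atTop_add_const_right atBot c (tendsto_neg_atBot_atTop : Tendsto (fun x : ℝ => -x) atBot atTop)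
  have hTop : Tendsto β atTop (nhds 1) := by
    rw [hβfun]
    have hA : Tendsto (fun θ : ℝ => Stmt7Aux.Φ f₁ (a - θ)) atTop (nhds 0) :=
      (Stmt7Aux.Φ_atBot hint₁).comp (hsub_atTop a)
    have hB : Tendsto (fun θ : ℝ => Stmt7Aux.Φ f₂ (b₁ - θ)) atTop (nhds 0) :=
      (Stmt7Aux.Φ_atBot hint₂).comp (hsub_atTop b₁)
    have hC : Tendsto (fun θ : ℝ => Stmt7Aux.Φ f₂ (b₂ - θ)) atTop (nhds 0) :=
      (Stmt7Aux.Φ_atBot hint₂).comp (hsub_atTop b₂)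
    have T := (((tendsto_const_nhds (x := (1:ℝ))).sub hA).mul ((tendsto_const_nhds (x := (1:ℝ))).sub hB)).add (hA.mul hC)
    have : ((1:ℝ) - 0) * ((1:ℝ) - 0) + 0 * 0 = 1 := by norm_num
    rwa [this] at T
  have hBot : Tendsto β atBot (nhds 1) := by
    rw [hβfun]
    have hA : Tendsto (fun θ : ℝ => Stmt7Aux.Φ f₁ (a - θ)) atBot (nhds 1) :=
      (Stmt7Aux.Φ_atTop hint₁ h₁i).comp (hsub_atBot a)
    have hB : Tendsto (fun θ : ℝ => Stmt7Aux.Φ f₂ (b₁ - θ)) atBot (nhds 1) :=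
      (Stmt7Aux.Φ_atTop hint₂ h₂i).comp (hsub_atBot b₁)
    have hC : Tendsto (fun θ : ℝ => Stmt7Aux.Φ f₂ (b₂ - θ)) atBot (nhds 1) :=
      (Stmt7Aux.Φ_atTop hint₂ h₂i).comp (hsub_atBot b₂)
    have T := (((tendsto_const_nhds (x := (1:ℝ))).sub hA).mul ((tendsto_const_nhds (x := (1:ℝ))).sub hB)).add (hA.mul hC)
    have : ((1:ℝ) - 1) * ((1:ℝ) - 1) + 1 * 1 = 1 := by norm_num
    rwa [this] at T
  have part3 : Tendsto β (cocompact ℝ) (nhds 1) := by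
    rw [cocompact_eq_atBot_atTop]
    exact tendsto_sup.2 ⟨hBot, hTop⟩
  refine ⟨part1, part2, part3, ?_⟩
  intro ε hε
  have hev : ∀ᶠ θ in cocompact ℝ, 1 - ε < β θ :=
    part3.eventually (eventually_gt_nhds (by linarith))
  rw [hasBasis_cocompact.eventually_iff] at hev
  obtain ⟨K, hK, hKs⟩ := hev
  refine ⟨K, hK, fun θ hθ => ?_⟩
  by_contra hn
  have := hKs (Set.mem_compl hn)
  have : ε ≤ 1 - β θ := hθ
  linarith [hKs (Set.mem_compl hn)]
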